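/- arXiv:math/0611108 — 2 statements merged into one kernel-verified Lean document; each statement's English description precedes it below -/
import Mathlib

section
/- Let φ = φ₀(1+r) with φ₀(t) = c·exp(iμ₀t - σ₀²t²/2), c > 0, and r differentiable with 1+r(t) ≠ 0. Then the functional μ₀(φ;t) = [Re(φ(t))Im(φ'(t)) - Re(φ'(t))Im(φ(t))]/|φ(t)|² satisfies |μ₀(φ;t) - μ₀| ≤ |r'(t)|·(1+|r(t)|)/|1+r(t)|². -/
open Complex Real

/-- The functional `μ₀(h;t) = [Re(h(t))Im(h'(t)) - Re(h'(t))Im(h(t))]/|h(t)|²`. -/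
noncomputable def muFun (h : ℝ → ℂ) (t : ℝ) : ℝ :=
  ((h t).re * (deriv h t).im - (deriv h t).re * (h t).im) / ‖h t‖ ^ 2

lemma muFun_eq_im (h : ℝ → ℂ) (t : ℝ) : muFun h t = (deriv h t / h t).im := by
  unfold muFun
  rw [Complex.div_im, Complex.sq_norm, Complex.normSq_apply]
  ring

theorem stmt7 (c μ₀ σ₀ : ℝ) (hc : 0 < c) (hσ : 0 < σ₀)
    (r : ℝ → ℂ) (hr : Differentiable ℝ r)
    (φ : ℝ → ℂ)
    (hφ : ∀ s : ℝ, φ s =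
      c * Complex.exp (Complex.I * μ₀ * s - σ₀ ^ 2 * s ^ 2 / 2) * (1 + r s))
    (t : ℝ) (hr0 : 1 + r t ≠ 0) :
    |muFun φ t - μ₀| ≤
      ‖deriv r t‖ * (1 + ‖r t‖) / ‖1 + r t‖ ^ 2 := by
  have hφ' : φ = fun s : ℝ =>
      (c : ℂ) * Complex.exp (Complex.I * μ₀ * s - σ₀ ^ 2 * s ^ 2 / 2) * (1 + r s) :=
    funext hφ
  subst hφ'
  have hre : HasDerivAt (fun s : ℝ => (s : ℂ)) 1 t := by
    simpa using (hasDerivAt_id t).ofReal_comp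
  have h1 : HasDerivAt (fun s : ℝ => Complex.I * μ₀ * (s : ℂ) - (σ₀ : ℂ) ^ 2 * (s : ℂ) ^ 2 / 2)
      (Complex.I * μ₀ - σ₀ ^ 2 * t) t := by
    have ha : HasDerivAt (fun s : ℝ => Complex.I * (μ₀ : ℂ) * (s : ℂ)) (Complex.I * μ₀) t := by
      simpa using hre.const_mul (Complex.I * (μ₀ : ℂ))
    have hsq : HasDerivAt (fun s : ℝ => (s : ℂ) ^ 2) (2 * t) t := by
      have h := hre.mul hre
      have : HasDerivAt (fun s : ℝ => (s : ℂ) * (s : ℂ)) (2 * t) t := by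
        exact h.congr_deriv (by ring)
      simpa [pow_two] using this
    have hb : HasDerivAt (fun s : ℝ => (σ₀ : ℂ) ^ 2 * (s : ℂ) ^ 2 / 2) ((σ₀ : ℂ) ^ 2 * t) t := by
      have := (hsq.const_mul ((σ₀ : ℂ) ^ 2)).div_const 2
      exact this.congr_deriv (by ring)
    exact ha.sub hb
  have h2 := h1.cexp
  have h3 := (h2.const_mul (c : ℂ)).mul ((hasDerivAt_const t (1 : ℂ)).add ((hr t).hasDerivAt))
  set E : ℂ := (c : ℂ) * Complex.exp (Complex.I * μ₀ * t - σ₀ ^ 2 * t ^ 2 / 2) with hE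
  have hEne : E ≠ 0 := by
    apply mul_ne_zero
    · exact_mod_cast hc.ne'
    · exact Complex.exp_ne_zero _
  have hD := h3.deriv
  have hquot : deriv (fun s : ℝ =>
      (c : ℂ) * Complex.exp (Complex.I * μ₀ * s - σ₀ ^ 2 * s ^ 2 / 2) * (1 + r s)) t /
      ((c : ℂ) * Complex.exp (Complex.I * μ₀ * t - σ₀ ^ 2 * t ^ 2 / 2) * (1 + r t)) =
      (Complex.I * μ₀ - σ₀ ^ 2 * t) + deriv r t / (1 + r t) := by
    have hcne : (c : ℂ) ≠ 0 := by exact_mod_cast hc.ne'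
    rw [show deriv (fun s : ℝ =>
        (c : ℂ) * Complex.exp (Complex.I * μ₀ * s - σ₀ ^ 2 * s ^ 2 / 2) * (1 + r s)) t = _ from hD, hE]
    field_simp [hcne, Complex.exp_ne_zero, hr0]
    simp only [Pi.add_apply]
    ring
  have hmu : muFun (fun s : ℝ =>
      (c : ℂ) * Complex.exp (Complex.I * μ₀ * s - σ₀ ^ 2 * s ^ 2 / 2) * (1 + r s)) t =
      μ₀ + (deriv r t / (1 + r t)).im := by
    rw [muFun_eq_im]
    simp only [hquot]
    simp [← Complex.ofReal_pow]
  rw [hmu]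
  have habs : |(deriv r t / (1 + r t)).im| ≤ ‖deriv r t‖ / ‖1 + r t‖ := by
    rw [← norm_div]
    exact Complex.abs_im_le_norm _
  have h1z : 0 < ‖1 + r t‖ := by
    exact norm_pos_iff.mpr hr0
  have hle : ‖1 + r t‖ ≤ 1 + ‖r t‖ := by
    simpa using norm_add_le 1 (r t)
  have : ‖deriv r t‖ / ‖1 + r t‖ ≤
      ‖deriv r t‖ * (1 + ‖r t‖) / ‖1 + r t‖ ^ 2 := by
    rw [div_le_div_iff₀ h1z (pow_pos h1z 2)]
    nlinarith [mul_le_mul_of_nonneg_left hle (mul_nonneg (norm_nonneg (deriv r t)) h1z.le), h1z, norm_nonneg (deriv r t)]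
  calc |μ₀ + (deriv r t / (1 + r t)).im - μ₀| = |(deriv r t / (1 + r t)).im| := by ring_nf
    _ ≤ _ := le_trans habs this
end

section
/- Let ρ(x) = 2(1-cos x)/x² for x ≠ 0, ρ(0) = 1, and for δ ≥ 0 let φ_δ*ρ denote convolution of ρ with the N(0,δ²) density (with φ_0*ρ = ρ). If (a_n) and (b_n) are sequences of nonnegative reals with max{a_n, b_n} → ∞, then (φ_{a_n} * ρ)(b_n) → 0 as n → ∞. -/
open Real MeasureTheory Filter

/-- Density of `N(0, δ²)` for `δ > 0`. -/
noncomputable def gaussDensity (δ x : ℝ) : ℝ :=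
  (1 / (δ * Real.sqrt (2 * Real.pi))) * Real.exp (-x ^ 2 / (2 * δ ^ 2))

/-- The function `ρ(x) = 2(1-cos x)/x²`, `ρ(0) = 1`. -/
noncomputable def rhoFun (x : ℝ) : ℝ :=
  if x = 0 then 1 else 2 * (1 - Real.cos x) / x ^ 2

lemma rho_nonneg (x : ℝ) : 0 ≤ rhoFun x := by
  unfold rhoFun
  split
  · norm_num
  · have h := Real.cos_le_one x
    have : (0:ℝ) ≤ x ^ 2 := sq_nonneg x
    apply div_nonneg <;> nlinarith

lemma rho_meas : Measurable rhoFun := by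
  unfold rhoFun
  exact Measurable.ite (measurableSet_singleton 0) measurable_const (by fun_prop)

lemma rho_le_four_div (x : ℝ) (hx : x ≠ 0) : rhoFun x ≤ 4 / x ^ 2 := by
  unfold rhoFun
  rw [if_neg hx]
  have hx2 : (0:ℝ) < x ^ 2 := by positivity
  gcongr
  nlinarith [Real.neg_one_le_cos x]

lemma rho_le_bound (x : ℝ) : rhoFun x ≤ 8 / (1 + x ^ 2) := by
  unfold rhoFun
  split
  · subst ‹x = 0›; norm_num
  · have hx2 : (0:ℝ) < x ^ 2 := by positivity
    have h1 : 1 - x ^ 2 / 2 ≤ Real.cos x := Real.one_sub_sq_div_two_le_cos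
    have h2 := Real.neg_one_le_cos x
    rw [div_le_div_iff₀ hx2 (by positivity)]
    nlinarith [mul_le_mul_of_nonneg_right (show 1 - Real.cos x ≤ 2 by linarith) (sq_nonneg x)]

lemma rho_integrable : Integrable rhoFun := by
  have hg : Integrable (fun x : ℝ => 8 * (1 / (1 + x ^ 2))) := by
    simp only [one_div]
    exact integrable_inv_one_add_sq.const_mul 8
  refine hg.mono rho_meas.aestronglyMeasurable ?_
  filter_upwards with x
  rw [Real.norm_eq_abs, Real.norm_eq_abs, abs_of_nonneg (rho_nonneg x),
    abs_of_nonneg (by positivity)]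
  calc rhoFun x ≤ 8 / (1 + x ^ 2) := rho_le_bound x
    _ = 8 * (1 / (1 + x ^ 2)) := by ring

lemma gauss_nonneg {δ : ℝ} (hδ : 0 ≤ δ) (x : ℝ) : 0 ≤ gaussDensity δ x := by
  unfold gaussDensity
  have := Real.sqrt_nonneg (2 * Real.pi)
  positivity

lemma gauss_le_const {δ : ℝ} (hδ : 0 < δ) (x : ℝ) :
    gaussDensity δ x ≤ 1 / (δ * Real.sqrt (2 * Real.pi)) := by
  unfold gaussDensity
  have hs : 0 < Real.sqrt (2 * Real.pi) := Real.sqrt_pos.2 (by positivity)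
  have h1 : Real.exp (-x ^ 2 / (2 * δ ^ 2)) ≤ 1 := by
    rw [Real.exp_le_one_iff]
    have : (0:ℝ) < 2 * δ ^ 2 := by positivity
    apply div_nonpos_of_nonpos_of_nonneg (by nlinarith [sq_nonneg x]) this.le
  nlinarith [Real.exp_pos (-x ^ 2 / (2 * δ ^ 2)), one_div_pos.2 (mul_pos hδ hs)]

lemma gauss_eq {δ : ℝ} : gaussDensity δ = fun x =>
    (1 / (δ * Real.sqrt (2 * Real.pi))) * Real.exp (-(1 / (2 * δ ^ 2)) * x ^ 2) := by
  funext x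
  unfold gaussDensity
  rw [show -x ^ 2 / (2 * δ ^ 2) = -(1 / (2 * δ ^ 2)) * x ^ 2 by ring]

lemma gauss_integrable {δ : ℝ} (hδ : 0 < δ) : Integrable (gaussDensity δ) := by
  rw [gauss_eq]
  exact (integrable_exp_neg_mul_sq (by positivity)).const_mul _

lemma gauss_integral {δ : ℝ} (hδ : 0 < δ) : ∫ x, gaussDensity δ x = 1 := by
  rw [gauss_eq]
  rw [MeasureTheory.integral_const_mul, integral_gaussian]
  have h1 : Real.pi / (1 / (2 * δ ^ 2)) = 2 * Real.pi * δ ^ 2 := by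
    field_simp
  rw [h1, show 2 * Real.pi * δ ^ 2 = δ ^ 2 * (2 * Real.pi) by ring,
    Real.sqrt_mul (sq_nonneg δ), Real.sqrt_sq hδ.le]
  have hs : 0 < Real.sqrt (2 * Real.pi) := Real.sqrt_pos.2 (by positivity)
  field_simp

lemma gauss_meas {δ : ℝ} : Measurable (gaussDensity δ) := by
  unfold gaussDensity; fun_prop

lemma sqrt_two_pi_ge_two : (2:ℝ) ≤ Real.sqrt (2 * Real.pi) := by
  have h4 : Real.sqrt 4 = 2 := by
    rw [show (4:ℝ) = 2 ^ 2 by norm_num, Real.sqrt_sq (by norm_num)]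
  calc (2:ℝ) = Real.sqrt 4 := h4.symm
    _ ≤ Real.sqrt (2 * Real.pi) := Real.sqrt_le_sqrt (by nlinarith [Real.pi_gt_three])

lemma gauss_half_bound {δ y t : ℝ} (hδ : 0 < δ) (hy : 0 < y) (ht : y / 2 ≤ |t|) :
    gaussDensity δ t ≤ 1 / y := by
  have hs : 0 < Real.sqrt (2 * Real.pi) := lt_of_lt_of_le (by norm_num) sqrt_two_pi_ge_two
  have hs2 := sqrt_two_pi_ge_two
  have step1 : gaussDensity δ t ≤ gaussDensity δ (y / 2) := by
    unfold gaussDensity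
    have ht2 : (y / 2) ^ 2 ≤ t ^ 2 := by
      have h0 : 0 ≤ y / 2 := by linarith
      calc (y / 2) ^ 2 ≤ |t| ^ 2 := by nlinarith [abs_nonneg t]
        _ = t ^ 2 := sq_abs t
    have : -t ^ 2 / (2 * δ ^ 2) ≤ -(y / 2) ^ 2 / (2 * δ ^ 2) := by
      apply div_le_div_of_nonneg_right ?_ (by positivity) |>.trans_eq rfl
      · linarith
    have hc : (0:ℝ) ≤ 1 / (δ * Real.sqrt (2 * Real.pi)) := by positivity
    exact mul_le_mul_of_nonneg_left (Real.exp_le_exp.2 this) hc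
  refine step1.trans ?_
  unfold gaussDensity
  set s := Real.sqrt (2 * Real.pi) with hsdef
  set E := Real.exp ((y / 2) ^ 2 / (2 * δ ^ 2)) with hE
  have hEpos : 0 < E := Real.exp_pos _
  rw [show -(y / 2) ^ 2 / (2 * δ ^ 2) = -((y / 2) ^ 2 / (2 * δ ^ 2)) by ring,
    Real.exp_neg, ← hE, ← one_div E]
  have key : y ≤ δ * s * E := by
    have hd : (y / 2) ^ 2 / (2 * δ ^ 2) = y ^ 2 / (8 * δ ^ 2) := by ring
    have hE1 : 1 + y ^ 2 / (8 * δ ^ 2) ≤ E := by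
      rw [hE, hd]
      exact Real.add_one_le_exp _ |>.trans_eq rfl |>.trans_eq' (by ring)
    have h1 : y ≤ 2 * δ * (1 + y ^ 2 / (8 * δ ^ 2)) := by
      have heq : 2 * δ * (1 + y ^ 2 / (8 * δ ^ 2)) = 2 * δ + y ^ 2 / (4 * δ) := by
        field_simp; ring
      have h2 : y - 2 * δ ≤ y ^ 2 / (4 * δ) := by
        rw [le_div_iff₀ (by positivity)]
        nlinarith [sq_nonneg (y - 2 * δ)]
      linarith [heq ▸ (by linarith : y ≤ 2 * δ + y ^ 2 / (4 * δ))]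
    calc y ≤ 2 * δ * (1 + y ^ 2 / (8 * δ ^ 2)) := h1
      _ ≤ δ * s * (1 + y ^ 2 / (8 * δ ^ 2)) := by
          apply mul_le_mul_of_nonneg_right ?_ (by positivity)
          nlinarith
      _ ≤ δ * s * E := by
          apply mul_le_mul_of_nonneg_left hE1 (by positivity)
  calc 1 / (δ * s) * (1 / E) = 1 / (δ * s * E) := by
        rw [div_mul_div_comm, one_mul]
    _ ≤ 1 / y := one_div_le_one_div_of_le hy key

lemma conv_integrable {δ y : ℝ} (hδ : 0 < δ) :
    Integrable (fun u => gaussDensity δ (y - u) * rhoFun u) := by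
  refine (rho_integrable.const_mul (1 / (δ * Real.sqrt (2 * Real.pi)))).mono ?_ ?_
  · exact ((gauss_meas.comp (measurable_const.sub measurable_id)).mul
      rho_meas).aestronglyMeasurable
  · filter_upwards with u
    have h1 : 0 ≤ gaussDensity δ (y - u) := gauss_nonneg hδ.le _
    have hs : 0 < Real.sqrt (2 * Real.pi) :=
      lt_of_lt_of_le (by norm_num) sqrt_two_pi_ge_two
    rw [Real.norm_eq_abs, Real.norm_eq_abs,
      abs_of_nonneg (mul_nonneg h1 (rho_nonneg u)),
      abs_of_nonneg (mul_nonneg (by positivity) (rho_nonneg u))]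
    exact mul_le_mul_of_nonneg_right (gauss_le_const hδ _) (rho_nonneg u)

lemma estA {δ y : ℝ} (hδ : 0 < δ) :
    (∫ u, gaussDensity δ (y - u) * rhoFun u) ≤ (∫ x, rhoFun x) / δ := by
  have hs : 0 < Real.sqrt (2 * Real.pi) :=
    lt_of_lt_of_le (by norm_num) sqrt_two_pi_ge_two
  have h1 : (∫ u, gaussDensity δ (y - u) * rhoFun u)
      ≤ ∫ u, (1 / (δ * Real.sqrt (2 * Real.pi))) * rhoFun u := by
    refine integral_mono (conv_integrable hδ) (rho_integrable.const_mul _) fun u => ?_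
    exact mul_le_mul_of_nonneg_right (gauss_le_const hδ _) (rho_nonneg u)
  rw [MeasureTheory.integral_const_mul] at h1
  refine h1.trans ?_
  have hC : 0 ≤ ∫ x, rhoFun x := integral_nonneg rho_nonneg
  calc 1 / (δ * Real.sqrt (2 * Real.pi)) * ∫ x, rhoFun x
      = (∫ x, rhoFun x) / (δ * Real.sqrt (2 * Real.pi)) := by ring
    _ ≤ (∫ x, rhoFun x) / δ := div_le_div_of_nonneg_left hC hδ (by nlinarith [sqrt_two_pi_ge_two, hδ])

lemma estB {δ y : ℝ} (hδ : 0 < δ) (hy : 0 < y) :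
    (∫ u, gaussDensity δ (y - u) * rhoFun u) ≤ (∫ x, rhoFun x) / y + 16 / y ^ 2 := by
  set s : Set ℝ := Set.Icc (-(y / 2)) (y / 2) with hsdef
  have hms : MeasurableSet s := measurableSet_Icc
  have hf : Integrable (fun u => gaussDensity δ (y - u) * rhoFun u) := conv_integrable hδ
  have hsplit := MeasureTheory.integral_add_compl hms hf
  have hcomp : Integrable (fun u => gaussDensity δ (y - u)) :=
    (gauss_integrable hδ).comp_sub_left y
  have bound1 : (∫ u in s, gaussDensity δ (y - u) * rhoFun u) ≤ (∫ x, rhoFun x) / y := by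
    have step : (∫ u in s, gaussDensity δ (y - u) * rhoFun u)
        ≤ ∫ u in s, (1 / y) * rhoFun u := by
      refine setIntegral_mono_on hf.integrableOn
        ((rho_integrable.const_mul (1 / y)).integrableOn) hms fun u hu => ?_
      obtain ⟨hu1, hu2⟩ := hu
      have habs : y / 2 ≤ |y - u| := le_trans (by linarith) (le_abs_self _)
      exact mul_le_mul_of_nonneg_right (gauss_half_bound hδ hy habs) (rho_nonneg u)
    refine step.trans ?_
    rw [MeasureTheory.integral_const_mul]
    have h2 : (∫ u in s, rhoFun u) ≤ ∫ x, rhoFun x :=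
      setIntegral_le_integral rho_integrable (Filter.Eventually.of_forall rho_nonneg)
    calc (1 / y) * ∫ u in s, rhoFun u ≤ (1 / y) * ∫ x, rhoFun x :=
          mul_le_mul_of_nonneg_left h2 (by positivity)
      _ = (∫ x, rhoFun x) / y := by ring
  have bound2 : (∫ u in sᶜ, gaussDensity δ (y - u) * rhoFun u) ≤ 16 / y ^ 2 := by
    have step : (∫ u in sᶜ, gaussDensity δ (y - u) * rhoFun u)
        ≤ ∫ u in sᶜ, gaussDensity δ (y - u) * (16 / y ^ 2) := by
      refine setIntegral_mono_on hf.integrableOn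
        (hcomp.mul_const _).integrableOn hms.compl fun u hu => ?_
      have hu' : ¬ (-(y / 2) ≤ u ∧ u ≤ y / 2) := by
        simpa [hsdef, Set.mem_Icc] using hu
      have huy : y / 2 < |u| := by
        rcases lt_or_ge u (-(y / 2)) with h | h
        · calc y / 2 < -u := by linarith
            _ ≤ |u| := neg_le_abs u
        · have : y / 2 < u := by
            rcases lt_or_ge (y / 2) u with h' | h'
            · exact h'
            · exact absurd ⟨h, h'⟩ hu'
          exact this.trans_le (le_abs_self u)
      have hu0 : u ≠ 0 := by
        intro h; rw [h, abs_zero] at huy; linarith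
      have hru : rhoFun u ≤ 16 / y ^ 2 := by
        refine (rho_le_four_div u hu0).trans ?_
        rw [div_le_div_iff₀ (by positivity) (by positivity)]
        have : y ^ 2 / 4 ≤ u ^ 2 := by
          have := sq_abs u
          nlinarith [abs_nonneg u]
        nlinarith
      exact mul_le_mul_of_nonneg_left hru (gauss_nonneg hδ.le _)
    refine step.trans ?_
    rw [MeasureTheory.integral_mul_const]
    have h3 : (∫ u in sᶜ, gaussDensity δ (y - u)) ≤ ∫ u, gaussDensity δ (y - u) :=
      setIntegral_le_integral hcomp
        (Filter.Eventually.of_forall fun u => gauss_nonneg hδ.le _)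
    have h4 : (∫ u, gaussDensity δ (y - u)) = 1 := by
      rw [integral_sub_left_eq_self (gaussDensity δ) volume y]
      exact gauss_integral hδ
    calc (∫ u in sᶜ, gaussDensity δ (y - u)) * (16 / y ^ 2)
        ≤ 1 * (16 / y ^ 2) := by
          apply mul_le_mul_of_nonneg_right (h3.trans_eq h4) (by positivity)
      _ = 16 / y ^ 2 := one_mul _
  linarith [hsplit]

/-- Convolution `(φ_δ * ρ)(y)`, with the convention `φ_0 * ρ = ρ`. -/
noncomputable def gaussConvRho (δ y : ℝ) : ℝ :=
  if δ = 0 then rhoFun y else ∫ u : ℝ, gaussDensity δ (y - u) * rhoFun u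

lemma conv_nonneg' {δ y : ℝ} (hδ : 0 ≤ δ) : 0 ≤ gaussConvRho δ y := by
  unfold gaussConvRho
  split
  · exact rho_nonneg y
  · exact integral_nonneg fun u => mul_nonneg (gauss_nonneg hδ _) (rho_nonneg u)

theorem stmt13 (a b : ℕ → ℝ) (ha : ∀ n, 0 ≤ a n) (hb : ∀ n, 0 ≤ b n)
    (hmax : Tendsto (fun n => max (a n) (b n)) atTop atTop) :
    Tendsto (fun n => gaussConvRho (a n) (b n)) atTop (nhds 0) := by
  set C : ℝ := ∫ x, rhoFun x with hC
  have hC0 : 0 ≤ C := integral_nonneg rho_nonneg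
  set K : ℝ := C + 16 with hK
  have hK0 : (16:ℝ) ≤ K := by linarith
  set m : ℕ → ℝ := fun n => max (a n) (b n) with hm
  have hupper : ∀ n, 1 ≤ m n →
      gaussConvRho (a n) (b n) ≤ K / m n + K / (m n) ^ 2 := by
    intro n hn
    have hmpos : 0 < m n := by linarith
    by_cases haz : a n = 0
    · have hmb : m n = b n := by
        rw [hm]; simp only; rw [haz, max_eq_right (hb n)]
      have hbpos : 0 < b n := hmb ▸ hmpos
      have h1 : gaussConvRho (a n) (b n) = rhoFun (b n) := by
        unfold gaussConvRho; rw [if_pos haz]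
      rw [h1, ← hmb] at *
      have h2 : rhoFun (m n) ≤ 4 / (m n) ^ 2 := by
        rw [hmb]; exact rho_le_four_div _ (by linarith [hmb ▸ hmpos])
      have h3 : (4:ℝ) / (m n) ^ 2 ≤ K / (m n) ^ 2 := by gcongr; linarith
      have h4 : 0 ≤ K / m n := by positivity
      linarith
    · have hap : 0 < a n := lt_of_le_of_ne (ha n) (Ne.symm haz)
      have h1 : gaussConvRho (a n) (b n) = ∫ u, gaussDensity (a n) (b n - u) * rhoFun u := by
        unfold gaussConvRho; rw [if_neg haz]
      rcases le_total (b n) (a n) with hle | hle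
      · have hma : m n = a n := by rw [hm]; simp only; rw [max_eq_left hle]
        have h2 := estA (δ := a n) (y := b n) hap
        rw [h1, ← hC] at *
        have h3 : C / a n ≤ K / m n := by
          rw [hma]; gcongr; linarith
        have h4 : 0 ≤ K / (m n) ^ 2 := by positivity
        linarith
      · have hmb : m n = b n := by rw [hm]; simp only; rw [max_eq_right hle]
        have hbpos : 0 < b n := hmb ▸ hmpos
        have h2 := estB (δ := a n) (y := b n) hap hbpos
        rw [h1, ← hC] at *
        have h3 : C / b n ≤ K / m n := by rw [hmb]; gcongr; linarith
        have h4 : (16:ℝ) / (b n) ^ 2 ≤ K / (m n) ^ 2 := by rw [hmb]; gcongr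
        linarith
  have hlow : ∀ n, 0 ≤ gaussConvRho (a n) (b n) := fun n => conv_nonneg' (ha n)
  have hev : ∀ᶠ n in atTop, 1 ≤ m n := hmax.eventually_ge_atTop 1
  have hg1 : Tendsto (fun n => K / m n) atTop (nhds 0) :=
    Tendsto.div_atTop tendsto_const_nhds hmax
  have hg2 : Tendsto (fun n => K / (m n) ^ 2) atTop (nhds 0) := by
    refine Tendsto.div_atTop tendsto_const_nhds ?_
    have := hmax.atTop_mul_atTop₀ hmax
    simpa [pow_two] using this
  have hg : Tendsto (fun n => K / m n + K / (m n) ^ 2) atTop (nhds 0) := by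
    simpa using hg1.add hg2
  refine tendsto_of_tendsto_of_tendsto_of_le_of_le' tendsto_const_nhds hg ?_ ?_
  · exact Filter.Eventually.of_forall hlow
  · filter_upwards [hev] with n hn using hupper n hn
end
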